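/- arXiv:2005.09570 — 2 statements merged into one kernel-verified Lean document; each statement's English description precedes it below -/
import Mathlib

section
/- Let ψ be a structural set and f a C¹ function from ℝ³ to ℝ_{0,3}. Then ψ∂[ν(f)] = −2 (f ψ∂) − ν(ψ∂ f), where ν(f) = Σᵢ ψⁱ f ψⁱ, f ψ∂ = Σᵢ (∂f/∂xᵢ) ψⁱ is the right Dirac operator, and ψ∂ f = Σᵢ ψⁱ ∂f/∂xᵢ. -/
noncomputable section

abbrev V3 : Type := Fin 3 → ℝ

/-- The negative-definite quadratic form on `ℝ³`, so that `CliffordAlgebra Q3 = ℝ_{0,3}`. -/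
def Q3 : QuadraticForm ℝ V3 := -(QuadraticMap.weightedSumSquares ℝ (fun _ : Fin 3 => (1:ℝ)))

/-- The real Clifford algebra `ℝ_{0,3}`. -/
abbrev Cl3 : Type := CliffordAlgebra Q3

namespace Cl3

def bCl : Module.Basis (Module.Free.ChooseBasisIndex ℝ Cl3) ℝ Cl3 := Module.Free.chooseBasis ℝ Cl3

def toLp : Cl3 →ₗ[ℝ] lp (fun _ : Module.Free.ChooseBasisIndex ℝ Cl3 => ℝ) ⊤ where
  toFun x := ⟨fun i => bCl.repr x i, by
    apply memℓp_infty
    have h1 : (Set.range ((bCl.repr x) : _ → ℝ)).Finite := by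
      apply Set.Finite.subset (((bCl.repr x).frange : Finset ℝ).finite_toSet.insert 0)
      rintro y ⟨i, rfl⟩
      by_cases h : (bCl.repr x) i = 0
      · simp [h]
      · exact Set.mem_insert_of_mem _ (by
          simp only [Finset.mem_coe, Finsupp.mem_frange]
          exact ⟨h, i, rfl⟩)
    have h2 : (Set.range fun i => ‖(bCl.repr x) i‖).Finite := by
      have := h1.image norm
      apply this.subset
      rintro y ⟨i, rfl⟩
      exact ⟨(bCl.repr x) i, ⟨i, rfl⟩, rfl⟩
    exact h2.bddAbove⟩
  map_add' x y := by ext i; simp <;> rfl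
  map_smul' c x := by ext i; simp

lemma toLp_injective : Function.Injective toLp := by
  intro x y h
  apply bCl.repr.injective
  ext i
  exact congrFun (congrArg Subtype.val h) i

instance : NormedAddCommGroup Cl3 := NormedAddCommGroup.induced Cl3 _ toLp toLp_injective
instance : NormedSpace ℝ Cl3 := NormedSpace.induced ℝ Cl3 _ toLp

end Cl3

/-- Embedding of vectors `ℝ³ ⊂ ℝ_{0,3}`. -/
def ι3 : V3 →ₗ[ℝ] Cl3 := CliffordAlgebra.ι Q3

/-- `ψ` is a structural set: `ψⁱψʲ + ψʲψⁱ = -2δᵢⱼ` inside `ℝ_{0,3}`. -/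
def StructuralSet (ψ : Fin 3 → V3) : Prop :=
  ∀ i j, ι3 (ψ i) * ι3 (ψ j) + ι3 (ψ j) * ι3 (ψ i)
      = algebraMap ℝ Cl3 (if i = j then -2 else 0)

/-- Partial derivative `∂f/∂xᵢ`. -/
def pd (i : Fin 3) (f : V3 → Cl3) : V3 → Cl3 := fun x => fderiv ℝ f x (Pi.single i 1)

/-- Left Dirac operator `ψ∂ f = Σᵢ ψⁱ ∂f/∂xᵢ`. -/
def DL (ψ : Fin 3 → V3) (f : V3 → Cl3) : V3 → Cl3 := fun x => ∑ i, ι3 (ψ i) * pd i f x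

/-- Right Dirac operator `f ψ∂ = Σᵢ (∂f/∂xᵢ) ψⁱ`. -/
def DR (ψ : Fin 3 → V3) (f : V3 → Cl3) : V3 → Cl3 := fun x => ∑ i, pd i f x * ι3 (ψ i)

/-- Two-sided operator `φ∂ f ψ∂ = Σᵢⱼ φⁱ (∂²f/∂xᵢ∂xⱼ) ψʲ`. -/
def DLR (φ ψ : Fin 3 → V3) (f : V3 → Cl3) : V3 → Cl3 :=
  fun x => ∑ i, ∑ j, ι3 (φ i) * pd i (pd j f) x * ι3 (ψ j)

/-- Componentwise Laplacian. -/
def lap (f : V3 → Cl3) : V3 → Cl3 := fun x => ∑ i, pd i (pd i f) x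

/-- `ν(a) = Σᵢ ψⁱ a ψⁱ`. -/
def nu (ψ : Fin 3 → V3) (a : Cl3) : Cl3 := ∑ i, ι3 (ψ i) * a * ι3 (ψ i)

/-- `ω(a) = Σᵢ φⁱ a ψⁱ`. -/
def om (φ ψ : Fin 3 → V3) (a : Cl3) : Cl3 := ∑ i, ι3 (φ i) * a * ι3 (ψ i)

/-- `x_ψ = Σᵢ ψⁱ xᵢ`. -/
def xPsi (ψ : Fin 3 → V3) (x : V3) : Cl3 := ∑ i, x i • ι3 (ψ i)



namespace Stmt3Aux

/-- Standard generators of `Cl3`. -/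
def gg (i : Fin 3) : Cl3 := ι3 (Pi.single i 1)

lemma Q3_single (i : Fin 3) : Q3 (Pi.single i 1) = -1 := by
  fin_cases i <;>
    simp [Q3, QuadraticMap.weightedSumSquares_apply, Pi.single_apply, Fin.sum_univ_three]

lemma gsq (i : Fin 3) : gg i * gg i = -1 := by
  rw [gg, ι3, CliffordAlgebra.ι_sq_scalar, Q3_single, map_neg, map_one]

lemma polar_single (i j : Fin 3) (h : i ≠ j) :
    QuadraticMap.polar Q3 (Pi.single i 1) (Pi.single j 1) = 0 := by
  simp only [QuadraticMap.polar, Q3, QuadraticMap.neg_apply,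
    QuadraticMap.weightedSumSquares_apply]
  fin_cases i <;> fin_cases j <;>
    simp_all [Fin.sum_univ_three, Pi.single_apply] <;> ring_nf

lemma gswap (i j : Fin 3) (h : i ≠ j) : gg i * gg j = -(gg j * gg i) := by
  have := CliffordAlgebra.ι_mul_ι_add_swap (Q := Q3) (Pi.single i 1) (Pi.single j 1)
  rw [polar_single i j h, map_zero] at this
  rw [gg, gg, ι3]
  linear_combination (norm := noncomm_ring) this

lemma gsq' (i : Fin 3) (x : Cl3) : gg i * (gg i * x) = -x := by
  rw [← mul_assoc, gsq, neg_one_mul]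

lemma gswap' (i j : Fin 3) (h : i ≠ j) (x : Cl3) :
    gg i * (gg j * x) = -(gg j * (gg i * x)) := by
  rw [← mul_assoc, gswap i j h, neg_mul, mul_assoc]

/-- Spanning set of monomials. -/
def genSet : Set Cl3 :=
  {1, gg 0, gg 1, gg 2, gg 0 * gg 1, gg 0 * gg 2, gg 1 * gg 2, gg 0 * (gg 1 * gg 2)}

def S : Submodule ℝ Cl3 := Submodule.span ℝ genSet

lemma hm0 : (1 : Cl3) ∈ S := Submodule.subset_span (by simp [genSet])
lemma hm1 : gg 0 ∈ S := Submodule.subset_span (by simp [genSet])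
lemma hm2 : gg 1 ∈ S := Submodule.subset_span (by simp [genSet])
lemma hm3 : gg 2 ∈ S := Submodule.subset_span (by simp [genSet])
lemma hm4 : gg 0 * gg 1 ∈ S := Submodule.subset_span (by simp [genSet])
lemma hm5 : gg 0 * gg 2 ∈ S := Submodule.subset_span (by simp [genSet])
lemma hm6 : gg 1 * gg 2 ∈ S := Submodule.subset_span (by simp [genSet])
lemma hm7 : gg 0 * (gg 1 * gg 2) ∈ S := Submodule.subset_span (by simp [genSet])

section
variable {y : Cl3}

lemma mulg0 (hy : y ∈ S) : gg 0 * y ∈ S := by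
  induction hy using Submodule.span_induction with
  | mem x hx =>
      have s10 := gswap' 1 0 (by decide)
      have s20 := gswap' 2 0 (by decide)
      have s10' := gswap 1 0 (by decide)
      have s20' := gswap 2 0 (by decide)
      have q := gsq 0
      have q' := gsq' 0
      rcases hx with rfl | rfl | rfl | rfl | rfl | rfl | rfl | rfl <;>
        (try simp only [mul_one, mul_assoc, q, q', mul_neg, neg_neg, neg_one_mul]) <;>
        first
          | exact hm0 | exact hm1 | exact hm2 | exact hm3
          | exact hm4 | exact hm5 | exact hm6 | exact hm7
          | exact S.neg_mem hm0 | exact S.neg_mem hm1 | exact S.neg_mem hm2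
          | exact S.neg_mem hm3 | exact S.neg_mem hm4 | exact S.neg_mem hm5
          | exact S.neg_mem hm6 | exact S.neg_mem hm7
  | zero => simpa using S.zero_mem
  | add x y _ _ hx hy => rw [mul_add]; exact S.add_mem hx hy
  | smul a x _ hx => rw [mul_smul_comm]; exact S.smul_mem a hx

lemma mulg1 (hy : y ∈ S) : gg 1 * y ∈ S := by
  induction hy using Submodule.span_induction with
  | mem x hx =>
      have s10 := gswap' 1 0 (by decide)
      have s21 := gswap' 2 1 (by decide)
      have s10' := gswap 1 0 (by decide)
      have s21' := gswap 2 1 (by decide)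
      have q := gsq 1
      have q' := gsq' 1
      rcases hx with rfl | rfl | rfl | rfl | rfl | rfl | rfl | rfl <;>
        (try simp only [mul_one, mul_assoc, q, q', s10, s10', s21, s21',
          mul_neg, neg_mul, neg_neg, neg_one_mul]) <;>
        first
          | exact hm0 | exact hm1 | exact hm2 | exact hm3
          | exact hm4 | exact hm5 | exact hm6 | exact hm7
          | exact S.neg_mem hm0 | exact S.neg_mem hm1 | exact S.neg_mem hm2
          | exact S.neg_mem hm3 | exact S.neg_mem hm4 | exact S.neg_mem hm5
          | exact S.neg_mem hm6 | exact S.neg_mem hm7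
  | zero => simpa using S.zero_mem
  | add x y _ _ hx hy => rw [mul_add]; exact S.add_mem hx hy
  | smul a x _ hx => rw [mul_smul_comm]; exact S.smul_mem a hx

lemma mulg2 (hy : y ∈ S) : gg 2 * y ∈ S := by
  induction hy using Submodule.span_induction with
  | mem x hx =>
      have s20 := gswap' 2 0 (by decide)
      have s21 := gswap' 2 1 (by decide)
      have s20' := gswap 2 0 (by decide)
      have s21' := gswap 2 1 (by decide)
      have q := gsq 2
      have q' := gsq' 2
      rcases hx with rfl | rfl | rfl | rfl | rfl | rfl | rfl | rfl <;>
        (try simp only [mul_one, mul_assoc, q, q', s20, s20', s21, s21',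
          mul_neg, neg_mul, neg_neg, neg_one_mul]) <;>
        first
          | exact hm0 | exact hm1 | exact hm2 | exact hm3
          | exact hm4 | exact hm5 | exact hm6 | exact hm7
          | exact S.neg_mem hm0 | exact S.neg_mem hm1 | exact S.neg_mem hm2
          | exact S.neg_mem hm3 | exact S.neg_mem hm4 | exact S.neg_mem hm5
          | exact S.neg_mem hm6 | exact S.neg_mem hm7
  | zero => simpa using S.zero_mem
  | add x y _ _ hx hy => rw [mul_add]; exact S.add_mem hx hy
  | smul a x _ hx => rw [mul_smul_comm]; exact S.smul_mem a hx

end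

lemma mulg_mem (i : Fin 3) {y : Cl3} (hy : y ∈ S) : gg i * y ∈ S := by
  fin_cases i
  · exact mulg0 hy
  · exact mulg1 hy
  · exact mulg2 hy

lemma mul_mem {x y : Cl3} (hx : x ∈ S) (hy : y ∈ S) : x * y ∈ S := by
  induction hx using Submodule.span_induction with
  | mem x hx =>
      rcases hx with rfl | rfl | rfl | rfl | rfl | rfl | rfl | rfl
      · simpa using hy
      · exact mulg_mem 0 hy
      · exact mulg_mem 1 hy
      · exact mulg_mem 2 hy
      · rw [mul_assoc]; exact mulg_mem 0 (mulg_mem 1 hy)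
      · rw [mul_assoc]; exact mulg_mem 0 (mulg_mem 2 hy)
      · rw [mul_assoc]; exact mulg_mem 1 (mulg_mem 2 hy)
      · rw [mul_assoc, mul_assoc]; exact mulg_mem 0 (mulg_mem 1 (mulg_mem 2 hy))
  | zero => simpa using S.zero_mem
  | add x y _ _ hx' hy' => rw [add_mul]; exact S.add_mem hx' hy'
  | smul a x _ hx' => rw [smul_mul_assoc]; exact S.smul_mem a hx'

lemma S_eq_top : S = ⊤ := by
  rw [eq_top_iff]
  rintro x -
  induction x using CliffordAlgebra.induction with
  | algebraMap r => rw [Algebra.algebraMap_eq_smul_one]; exact S.smul_mem r hm0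
  | ι v =>
      have hv : (v : V3) = ∑ i, v i • (Pi.single i 1 : V3) := by
        funext j
        fin_cases j <;> simp [Fin.sum_univ_three, Pi.single_apply]
      have : (CliffordAlgebra.ι Q3) v = ∑ i, v i • gg i := by
        nth_rewrite 1 [hv]
        rw [map_sum]
        exact Finset.sum_congr rfl fun i _ => by rw [map_smul]; rfl
      rw [this]
      exact Submodule.sum_mem _ fun i _ => S.smul_mem _ (by fin_cases i <;>
        [exact hm1; exact hm2; exact hm3])
  | mul a b ha hb => exact mul_mem ha hb
  | add a b ha hb => exact S.add_mem ha hb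

end Stmt3Aux

instance : Module.Finite ℝ Cl3 :=
  ⟨Stmt3Aux.S_eq_top ▸ Submodule.fg_span (by unfold Stmt3Aux.genSet; apply Set.toFinite)⟩

def nuL (ψ : Fin 3 → V3) : Cl3 →ₗ[ℝ] Cl3 where
  toFun := nu ψ
  map_add' a b := by simp [nu, mul_add, add_mul, Finset.sum_add_distrib]
  map_smul' c a := by simp [nu, Finset.smul_sum, mul_smul_comm, smul_mul_assoc]

lemma pd_linear (L : Cl3 →ₗ[ℝ] Cl3) {f : V3 → Cl3} (hf : Differentiable ℝ f)
    (i : Fin 3) (x : V3) : pd i (fun y => L (f y)) x = L (pd i f x) := by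
  have h : HasFDerivAt (fun y => L.toContinuousLinearMap (f y))
      (L.toContinuousLinearMap.comp (fderiv ℝ f x)) x :=
    L.toContinuousLinearMap.hasFDerivAt.comp x (hf x).hasFDerivAt
  unfold pd
  rw [show (fun y => L (f y)) = (fun y => L.toContinuousLinearMap (f y)) from rfl, h.fderiv]
  simp

/-- `ψ∂[ν(f)] = -2(fψ∂) - ν(ψ∂f)`. -/
theorem stmt3 (ψ : Fin 3 → V3) (hψ : StructuralSet ψ)
    (f : V3 → Cl3) (hf : ContDiff ℝ 1 f) :
    ∀ x, DL ψ (fun y => nu ψ (f y)) x = (-2 : ℝ) • DR ψ f x - nu ψ (DL ψ f x) := by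
  intro x
  have hdf : Differentiable ℝ f := hf.differentiable one_ne_zero
  set e : Fin 3 → Cl3 := fun i => ι3 (ψ i) with he
  set a : Fin 3 → Cl3 := fun i => pd i f x with ha
  have hpd : ∀ i, pd i (fun y => nu ψ (f y)) x = nu ψ (a i) := fun i =>
    pd_linear (nuL ψ) hdf i x
  have key : ∀ i j, e i * e j = algebraMap ℝ Cl3 (if i = j then (-2:ℝ) else 0) - e j * e i :=
    fun i j => eq_sub_of_add_eq (hψ i j)
  calc DL ψ (fun y => nu ψ (f y)) x
      = ∑ i, ∑ j, (e i * e j) * (a i * e j) := by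
        unfold DL
        refine Finset.sum_congr rfl fun i _ => ?_
        rw [hpd i]
        unfold nu
        rw [Finset.mul_sum]
        exact Finset.sum_congr rfl fun j _ => by simp [mul_assoc, he, ha]
    _ = ∑ i, ∑ j, ((if i = j then (-2:ℝ) else 0) • (a i * e j) - e j * (e i * a i) * e j) := by
        refine Finset.sum_congr rfl fun i _ => Finset.sum_congr rfl fun j _ => ?_
        rw [key i j, sub_mul]
        simp only [Algebra.smul_def]
        congr 1
        simp [mul_assoc]
    _ = (-2 : ℝ) • DR ψ f x - nu ψ (DL ψ f x) := by
        simp only [Finset.sum_sub_distrib]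
        congr 1
        · simp only [ite_smul, zero_smul, Finset.sum_ite_eq, Finset.mem_univ, if_true]
          simp [DR, Finset.smul_sum, he, ha]
        · rw [Finset.sum_comm]
          simp [nu, DL, Finset.sum_mul, Finset.mul_sum, mul_assoc, he, ha]
end
end

section
/- Let φ, ψ be structural sets and α, β real with β ≠ 0 and α² ≠ β². If u is a C³ function from an open set Ω ⊆ ℝ³ to ℝ_{0,3} that is (φ,ψ)-harmonic (φ∂ ψ∂ u = 0) or (ψ,ψ)-inframonogenic (ψ∂ u ψ∂ = 0), then w̃ = u ψ∂ − (α/β) ψ∂ u satisfies α(φ∂ w̃ ψ∂) + β(φ∂ ψ∂ w̃) = 0 in Ω. -/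
noncomputable section

section FinDim

/-- generators -/
def εg : Fin 3 → Cl3 := fun i => ι3 (Pi.single i 1)

lemma Q3_single (i : Fin 3) : Q3 (Pi.single i 1) = -1 := by
  simp [Q3, QuadraticMap.weightedSumSquares_apply, Pi.single_apply, Finset.sum_ite_eq']

lemma Q3_polar (i j : Fin 3) (h : i ≠ j) :
    QuadraticMap.polar Q3 (Pi.single i 1) (Pi.single j 1) = 0 := by
  fin_cases i <;> fin_cases j <;>
    simp_all [QuadraticMap.polar, Q3, QuadraticMap.weightedSumSquares_apply,
      Fin.sum_univ_three, Pi.single_apply]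

lemma eps_sq (i : Fin 3) : εg i * εg i = -1 := by
  rw [εg, ι3, CliffordAlgebra.ι_sq_scalar, Q3_single, map_neg, map_one]

lemma eps_sq' (i : Fin 3) (x : Cl3) : εg i * (εg i * x) = -x := by
  rw [← mul_assoc, eps_sq, neg_one_mul]

lemma eps_swap (i j : Fin 3) (h : i ≠ j) : εg j * εg i = -(εg i * εg j) := by
  have h0 := CliffordAlgebra.ι_mul_ι_add_swap (Q := Q3) (Pi.single i 1) (Pi.single j 1)
  rw [Q3_polar i j h, map_zero] at h0
  exact eq_neg_of_add_eq_zero_left (by rw [add_comm]; exact h0)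

lemma eps_swap' (i j : Fin 3) (h : i ≠ j) (x : Cl3) :
    εg j * (εg i * x) = -(εg i * (εg j * x)) := by
  rw [← mul_assoc, eps_swap i j h, ← mul_assoc, neg_mul]

end FinDim
section FinDim2

def Gset : Set Cl3 :=
  {1, εg 0, εg 1, εg 2, εg 0 * εg 1, εg 0 * εg 2, εg 1 * εg 2, εg 0 * (εg 1 * εg 2)}

def Wsub : Submodule ℝ Cl3 := Submodule.span ℝ Gset

lemma mem_W_of_G {x : Cl3} (hx : x ∈ Gset) : x ∈ Wsub := Submodule.subset_span hx

lemma hg1 : (1:Cl3) ∈ Wsub := mem_W_of_G (Or.inl rfl)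
lemma hg1' : εg 0 ∈ Wsub := mem_W_of_G (Or.inr (Or.inl rfl))
lemma hg2 : εg 1 ∈ Wsub := mem_W_of_G (Or.inr (Or.inr (Or.inl rfl)))
lemma hg3 : εg 2 ∈ Wsub := mem_W_of_G (Or.inr (Or.inr (Or.inr (Or.inl rfl))))
lemma hg4 : εg 0 * εg 1 ∈ Wsub := mem_W_of_G (Or.inr (Or.inr (Or.inr (Or.inr (Or.inl rfl)))))
lemma hg5 : εg 0 * εg 2 ∈ Wsub :=
  mem_W_of_G (Or.inr (Or.inr (Or.inr (Or.inr (Or.inr (Or.inl rfl))))))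
lemma hg6 : εg 1 * εg 2 ∈ Wsub :=
  mem_W_of_G (Or.inr (Or.inr (Or.inr (Or.inr (Or.inr (Or.inr (Or.inl rfl)))))))
lemma hg7 : εg 0 * (εg 1 * εg 2) ∈ Wsub :=
  mem_W_of_G (Or.inr (Or.inr (Or.inr (Or.inr (Or.inr (Or.inr (Or.inr rfl)))))))

lemma sw10 (x : Cl3) : εg 1 * (εg 0 * x) = -(εg 0 * (εg 1 * x)) := eps_swap' 0 1 (by decide) x
lemma sw20 (x : Cl3) : εg 2 * (εg 0 * x) = -(εg 0 * (εg 2 * x)) := eps_swap' 0 2 (by decide) x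
lemma sw21 (x : Cl3) : εg 2 * (εg 1 * x) = -(εg 1 * (εg 2 * x)) := eps_swap' 1 2 (by decide) x
lemma sw10' : εg 1 * εg 0 = -(εg 0 * εg 1) := eps_swap 0 1 (by decide)
lemma sw20' : εg 2 * εg 0 = -(εg 0 * εg 2) := eps_swap 0 2 (by decide)
lemma sw21' : εg 2 * εg 1 = -(εg 1 * εg 2) := eps_swap 1 2 (by decide)

set_option maxHeartbeats 1000000 in
lemma G_mul_eps {g : Cl3} (hg : g ∈ Gset) (i : Fin 3) : g * εg i ∈ Wsub := by
  have h3 : i = 0 ∨ i = 1 ∨ i = 2 := by fin_cases i <;> simp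
  simp only [Gset, Set.mem_insert_iff, Set.mem_singleton_iff] at hg
  rcases hg with rfl|rfl|rfl|rfl|rfl|rfl|rfl|rfl <;> rcases h3 with rfl|rfl|rfl <;>
    · try simp only [mul_assoc, one_mul, mul_one, eps_sq, eps_sq', sw10, sw20, sw21, sw10', sw20',
        sw21', mul_neg, neg_neg, neg_mul]
      first
        | exact hg1 | exact hg1' | exact hg2 | exact hg3 | exact hg4 | exact hg5
        | exact hg6 | exact hg7
        | exact Wsub.neg_mem hg1 | exact Wsub.neg_mem hg1' | exact Wsub.neg_mem hg2
        | exact Wsub.neg_mem hg3 | exact Wsub.neg_mem hg4 | exact Wsub.neg_mem hg5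
        | exact Wsub.neg_mem hg6 | exact Wsub.neg_mem hg7
lemma ι3_eq_sum (v : V3) : ι3 v = ∑ i, v i • εg i := by
  have hv : v = ∑ i : Fin 3, v i • (Pi.single i (1:ℝ) : V3) := by
    ext j
    rw [Finset.sum_apply]
    simp [Pi.single_apply]
  conv_lhs => rw [hv]
  rw [map_sum]
  exact Finset.sum_congr rfl fun i _ => by rw [map_smul]; rfl

lemma W_mul_eps {x : Cl3} (hx : x ∈ Wsub) (i : Fin 3) : x * εg i ∈ Wsub := by
  induction hx using Submodule.span_induction with
  | mem g hg => exact G_mul_eps hg i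
  | zero => simpa using Wsub.zero_mem
  | add a b _ _ ha hb => rw [add_mul]; exact Wsub.add_mem ha hb
  | smul c a _ ha => rw [smul_mul_assoc]; exact Wsub.smul_mem c ha

lemma W_mul (a : Cl3) : ∀ x ∈ Wsub, x * a ∈ Wsub := by
  induction a using CliffordAlgebra.induction with
  | algebraMap r =>
      intro x hx
      rw [← Algebra.commutes r x, ← Algebra.smul_def r x]
      exact Wsub.smul_mem r hx
  | ι v =>
      intro x hx
      rw [show (CliffordAlgebra.ι Q3) v = ι3 v from rfl, ι3_eq_sum, Finset.mul_sum]
      exact Submodule.sum_mem _ fun i _ => by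
        rw [mul_smul_comm]; exact Wsub.smul_mem _ (W_mul_eps hx i)
  | mul a b ha hb => intro x hx; rw [← mul_assoc]; exact hb _ (ha _ hx)
  | add a b ha hb => intro x hx; rw [mul_add]; exact Wsub.add_mem (ha _ hx) (hb _ hx)

lemma Wsub_eq_top : Wsub = ⊤ := by
  refine le_antisymm le_top fun x _ => ?_
  simpa using W_mul x 1 hg1

instance Cl3.finite : Module.Finite ℝ Cl3 := by
  refine ⟨Submodule.fg_def.2 ⟨Gset, ?_, Wsub_eq_top⟩⟩
  apply Set.Finite.insert; apply Set.Finite.insert; apply Set.Finite.insert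
  apply Set.Finite.insert; apply Set.Finite.insert; apply Set.Finite.insert
  apply Set.Finite.insert; exact Set.finite_singleton _

example : FiniteDimensional ℝ Cl3 := inferInstance
section Calc

/-- Left multiplication as a continuous linear map. -/
def mulL (c : Cl3) : Cl3 →L[ℝ] Cl3 := LinearMap.toContinuousLinearMap (LinearMap.mulLeft ℝ c)
/-- Right multiplication as a continuous linear map. -/
def mulR (c : Cl3) : Cl3 →L[ℝ] Cl3 := LinearMap.toContinuousLinearMap (LinearMap.mulRight ℝ c)

@[simp] lemma mulL_apply (c x : Cl3) : mulL c x = c * x := rfl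
@[simp] lemma mulR_apply (c x : Cl3) : mulR c x = x * c := rfl

variable {f g : V3 → Cl3} {x : V3} {Ω : Set V3}

lemma pd_clm (L : Cl3 →L[ℝ] Cl3) (hf : DifferentiableAt ℝ f x) (i : Fin 3) :
    pd i (fun y => L (f y)) x = L (pd i f x) := by
  unfold pd
  rw [show (fun y => L (f y)) = ⇑L ∘ f from rfl, (L.hasFDerivAt.comp x hf.hasFDerivAt).fderiv]
  rfl

lemma pd_const_mul (c : Cl3) (hf : DifferentiableAt ℝ f x) (i : Fin 3) :
    pd i (fun y => c * f y) x = c * pd i f x := pd_clm (mulL c) hf i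

lemma pd_mul_const (c : Cl3) (hf : DifferentiableAt ℝ f x) (i : Fin 3) :
    pd i (fun y => f y * c) x = pd i f x * c := pd_clm (mulR c) hf i

lemma pd_smul (c : ℝ) (hf : DifferentiableAt ℝ f x) (i : Fin 3) :
    pd i (fun y => c • f y) x = c • pd i f x := by
  unfold pd; rw [fderiv_fun_const_smul hf]; rfl

lemma pd_sub (hf : DifferentiableAt ℝ f x) (hg : DifferentiableAt ℝ g x) (i : Fin 3) :
    pd i (fun y => f y - g y) x = pd i f x - pd i g x := by
  unfold pd; rw [fderiv_fun_sub hf hg]; rfl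

lemma pd_add (hf : DifferentiableAt ℝ f x) (hg : DifferentiableAt ℝ g x) (i : Fin 3) :
    pd i (fun y => f y + g y) x = pd i f x + pd i g x := by
  unfold pd; rw [fderiv_fun_add hf hg]; rfl

lemma pd_sum {s : Finset (Fin 3)} {A : Fin 3 → V3 → Cl3}
    (hA : ∀ j ∈ s, DifferentiableAt ℝ (A j) x) (i : Fin 3) :
    pd i (fun y => ∑ j ∈ s, A j y) x = ∑ j ∈ s, pd i (A j) x := by
  unfold pd; rw [fderiv_fun_sum hA, ContinuousLinearMap.sum_apply]

lemma pd_congr (hΩ : IsOpen Ω) (h : Set.EqOn f g Ω) (hx : x ∈ Ω) (i : Fin 3) :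
    pd i f x = pd i g x := by
  unfold pd
  rw [Filter.EventuallyEq.fderiv_eq (Filter.eventuallyEq_of_mem (hΩ.mem_nhds hx) h)]

lemma pd_const (c : Cl3) (i : Fin 3) : pd i (fun _ => c) x = 0 := by
  unfold pd; rw [fderiv_fun_const]; rfl

lemma contDiffOn_pd {n m : WithTop ℕ∞} (hΩ : IsOpen Ω) (hf : ContDiffOn ℝ n f Ω)
    (hmn : m + 1 ≤ n) (i : Fin 3) : ContDiffOn ℝ m (pd i f) Ω :=
  (hf.fderiv_of_isOpen hΩ hmn).clm_apply contDiffOn_const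

lemma diffAt {n : WithTop ℕ∞} (hΩ : IsOpen Ω) (hf : ContDiffOn ℝ n f Ω) (hn : 1 ≤ n)
    (hx : x ∈ Ω) : DifferentiableAt ℝ f x :=
  (hf.contDiffAt (hΩ.mem_nhds hx)).differentiableAt (lt_of_lt_of_le zero_lt_one hn).ne'

lemma pd_comm {n : WithTop ℕ∞} (hΩ : IsOpen Ω) (hf : ContDiffOn ℝ n f Ω) (hn : 2 ≤ n)
    (hx : x ∈ Ω) (i j : Fin 3) : pd i (pd j f) x = pd j (pd i f) x := by
  have hca : ContDiffAt ℝ 2 f x := (hf.contDiffAt (hΩ.mem_nhds hx)).of_le hn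
  have hsymm := hca.isSymmSndFDerivAt (by simp)
  have hder : DifferentiableAt ℝ (fderiv ℝ f) x :=
    (hca.fderiv_right (m := 1) (by norm_num)).differentiableAt one_ne_zero
  have key : ∀ a b : Fin 3, pd a (pd b f) x
      = fderiv ℝ (fderiv ℝ f) x (Pi.single a 1) (Pi.single b 1) := by
    intro a b
    have : pd b f = fun y => (fderiv ℝ f y) (Pi.single b 1) := rfl
    rw [this]
    show fderiv ℝ (fun y => (fderiv ℝ f y) (Pi.single b 1)) x (Pi.single a 1) = _
    rw [fderiv_clm_apply hder (differentiableAt_const _)]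
    simp
  rw [key i j, key j i, hsymm]

end Calc
section Ops

variable {φ ψ : Fin 3 → V3} {f : V3 → Cl3} {Ω : Set V3} {x : V3}

lemma diff_const_mul {c : Cl3} (hf : DifferentiableAt ℝ f x) :
    DifferentiableAt ℝ (fun y => c * f y) x := ((mulL c).differentiableAt).comp x hf

lemma diff_mul_const {c : Cl3} (hf : DifferentiableAt ℝ f x) :
    DifferentiableAt ℝ (fun y => f y * c) x := ((mulR c).differentiableAt).comp x hf

lemma contDiffOn_DL {n m : WithTop ℕ∞} (hΩ : IsOpen Ω) (hf : ContDiffOn ℝ n f Ω)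
    (hmn : m + 1 ≤ n) : ContDiffOn ℝ m (DL ψ f) Ω := by
  unfold DL
  exact ContDiffOn.sum fun i _ =>
    (mulL (ι3 (ψ i))).contDiff.comp_contDiffOn (contDiffOn_pd hΩ hf hmn i)

lemma contDiffOn_DR {n m : WithTop ℕ∞} (hΩ : IsOpen Ω) (hf : ContDiffOn ℝ n f Ω)
    (hmn : m + 1 ≤ n) : ContDiffOn ℝ m (DR ψ f) Ω := by
  unfold DR
  exact ContDiffOn.sum fun i _ =>
    (mulR (ι3 (ψ i))).contDiff.comp_contDiffOn (contDiffOn_pd hΩ hf hmn i)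

lemma pdiff2 {n : WithTop ℕ∞} (hΩ : IsOpen Ω) (hf : ContDiffOn ℝ n f Ω) (hn : 2 ≤ n)
    (hx : x ∈ Ω) (j : Fin 3) : DifferentiableAt ℝ (pd j f) x :=
  diffAt hΩ (contDiffOn_pd (m := 1) hΩ hf (le_trans (by norm_num) hn) j) le_rfl hx

lemma pd_DL {n : WithTop ℕ∞} (hΩ : IsOpen Ω) (hf : ContDiffOn ℝ n f Ω) (hn : 2 ≤ n)
    (hx : x ∈ Ω) (i : Fin 3) :
    pd i (DL ψ f) x = ∑ j, ι3 (ψ j) * pd i (pd j f) x := by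
  unfold DL
  rw [pd_sum (fun j _ => diff_const_mul (pdiff2 hΩ hf hn hx j)) i]
  exact Finset.sum_congr rfl fun j _ => pd_const_mul _ (pdiff2 hΩ hf hn hx j) i

lemma pd_DR {n : WithTop ℕ∞} (hΩ : IsOpen Ω) (hf : ContDiffOn ℝ n f Ω) (hn : 2 ≤ n)
    (hx : x ∈ Ω) (i : Fin 3) :
    pd i (DR ψ f) x = ∑ j, pd i (pd j f) x * ι3 (ψ j) := by
  unfold DR
  rw [pd_sum (fun j _ => diff_mul_const (pdiff2 hΩ hf hn hx j)) i]
  exact Finset.sum_congr rfl fun j _ => pd_mul_const _ (pdiff2 hΩ hf hn hx j) i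

/-- `φ∂ (f ψ∂) = φ∂ f ψ∂` pointwise on an open set. -/
lemma DL_DR {n : WithTop ℕ∞} (hΩ : IsOpen Ω) (hf : ContDiffOn ℝ n f Ω) (hn : 2 ≤ n)
    (hx : x ∈ Ω) : DL φ (DR ψ f) x = DLR φ ψ f x := by
  unfold DL DLR
  refine Finset.sum_congr rfl fun i _ => ?_
  rw [pd_DR hΩ hf hn hx i, Finset.mul_sum]
  exact Finset.sum_congr rfl fun j _ => by rw [mul_assoc]

/-- `(φ∂ f) ψ∂ = φ∂ f ψ∂` pointwise on an open set (uses symmetry of 2nd derivatives). -/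
lemma DR_DL {n : WithTop ℕ∞} (hΩ : IsOpen Ω) (hf : ContDiffOn ℝ n f Ω) (hn : 2 ≤ n)
    (hx : x ∈ Ω) : DR ψ (DL φ f) x = DLR φ ψ f x := by
  unfold DR DLR
  rw [Finset.sum_comm]
  refine Finset.sum_congr rfl fun j _ => ?_
  rw [pd_DL hΩ hf hn hx j, Finset.sum_mul]
  exact Finset.sum_congr rfl fun i _ => by rw [pd_comm hΩ hf hn hx j i]

/-- polarization: `Σᵢⱼ ψⁱψʲ Aᵢⱼ = -Σᵢ Aᵢᵢ` for symmetric `A`. -/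
lemma struct_sum_left (hψ : StructuralSet ψ) (A : Fin 3 → Fin 3 → Cl3)
    (hA : ∀ i j, A i j = A j i) :
    ∑ i, ∑ j, ι3 (ψ i) * (ι3 (ψ j) * A i j) = -∑ i, A i i := by
  have h2 : (2:ℝ) • (∑ i, ∑ j, ι3 (ψ i) * (ι3 (ψ j) * A i j))
      = (2:ℝ) • (-∑ i, A i i) := by
    rw [two_smul, two_smul]
    have hswap : ∑ i, ∑ j, ι3 (ψ i) * (ι3 (ψ j) * A i j)
        = ∑ i, ∑ j, ι3 (ψ j) * (ι3 (ψ i) * A i j) := by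
      rw [Finset.sum_comm]
      exact Finset.sum_congr rfl fun i _ => Finset.sum_congr rfl fun j _ => by rw [hA i j]
    nth_rewrite 2 [hswap]
    simp only [← Finset.sum_add_distrib]
    have : ∀ i : Fin 3, ∑ j, (ι3 (ψ i) * (ι3 (ψ j) * A i j) + ι3 (ψ j) * (ι3 (ψ i) * A i j))
        = (-2:ℝ) • A i i := by
      intro i
      have : ∀ j : Fin 3, ι3 (ψ i) * (ι3 (ψ j) * A i j) + ι3 (ψ j) * (ι3 (ψ i) * A i j)
          = if i = j then (-2:ℝ) • A i j else 0 := by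
        intro j
        have hrel := hψ i j
        calc ι3 (ψ i) * (ι3 (ψ j) * A i j) + ι3 (ψ j) * (ι3 (ψ i) * A i j)
            = (ι3 (ψ i) * ι3 (ψ j) + ι3 (ψ j) * ι3 (ψ i)) * A i j := by noncomm_ring
          _ = algebraMap ℝ Cl3 (if i = j then -2 else 0) * A i j := by rw [hrel]
          _ = (if i = j then (-2:ℝ) else 0) • A i j := by rw [Algebra.smul_def]
          _ = if i = j then (-2:ℝ) • A i j else 0 := by split <;> simp
      rw [Finset.sum_congr rfl fun j _ => this j, Finset.sum_ite_eq Finset.univ i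
        (fun j => (-2:ℝ) • A i j)]
      simp
    rw [Finset.sum_congr rfl fun i _ => this i]
    rw [← Finset.smul_sum]
    rw [show (-2:ℝ) = (-1) + (-1) by norm_num, add_smul, neg_one_smul]
  exact smul_right_injective Cl3 (by norm_num : (2:ℝ) ≠ 0) h2

lemma struct_sum_right (hψ : StructuralSet ψ) (A : Fin 3 → Fin 3 → Cl3)
    (hA : ∀ i j, A i j = A j i) :
    ∑ i, ∑ j, A i j * ι3 (ψ j) * ι3 (ψ i) = -∑ i, A i i := by
  have h2 : (2:ℝ) • (∑ i, ∑ j, A i j * ι3 (ψ j) * ι3 (ψ i))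
      = (2:ℝ) • (-∑ i, A i i) := by
    rw [two_smul, two_smul]
    have hswap : ∑ i, ∑ j, A i j * ι3 (ψ j) * ι3 (ψ i)
        = ∑ i, ∑ j, A i j * ι3 (ψ i) * ι3 (ψ j) := by
      rw [Finset.sum_comm]
      exact Finset.sum_congr rfl fun i _ => Finset.sum_congr rfl fun j _ => by rw [hA i j]
    nth_rewrite 2 [hswap]
    simp only [← Finset.sum_add_distrib]
    have : ∀ i : Fin 3, ∑ j, (A i j * ι3 (ψ j) * ι3 (ψ i) + A i j * ι3 (ψ i) * ι3 (ψ j))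
        = (-2:ℝ) • A i i := by
      intro i
      have : ∀ j : Fin 3, A i j * ι3 (ψ j) * ι3 (ψ i) + A i j * ι3 (ψ i) * ι3 (ψ j)
          = if i = j then (-2:ℝ) • A i j else 0 := by
        intro j
        have hrel := hψ i j
        calc A i j * ι3 (ψ j) * ι3 (ψ i) + A i j * ι3 (ψ i) * ι3 (ψ j)
            = A i j * (ι3 (ψ i) * ι3 (ψ j) + ι3 (ψ j) * ι3 (ψ i)) := by noncomm_ring
          _ = A i j * algebraMap ℝ Cl3 (if i = j then -2 else 0) := by rw [hrel]
          _ = (if i = j then (-2:ℝ) else 0) • A i j := by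
              rw [← Algebra.commutes, Algebra.smul_def]
          _ = if i = j then (-2:ℝ) • A i j else 0 := by split <;> simp
      rw [Finset.sum_congr rfl fun j _ => this j, Finset.sum_ite_eq Finset.univ i
        (fun j => (-2:ℝ) • A i j)]
      simp
    rw [Finset.sum_congr rfl fun i _ => this i]
    rw [← Finset.smul_sum]
    rw [show (-2:ℝ) = (-1) + (-1) by norm_num, add_smul, neg_one_smul]
  exact smul_right_injective Cl3 (by norm_num : (2:ℝ) ≠ 0) h2

/-- `ψ∂ψ∂ f = -Δf` pointwise on an open set. -/
lemma DL_DL {n : WithTop ℕ∞} (hψ : StructuralSet ψ) (hΩ : IsOpen Ω)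
    (hf : ContDiffOn ℝ n f Ω) (hn : 2 ≤ n) (hx : x ∈ Ω) :
    DL ψ (DL ψ f) x = -lap f x :=
  calc DL ψ (DL ψ f) x = ∑ i, ι3 (ψ i) * pd i (DL ψ f) x := rfl
    _ = ∑ i, ∑ j, ι3 (ψ i) * (ι3 (ψ j) * pd i (pd j f) x) :=
        Finset.sum_congr rfl fun i _ => by rw [pd_DL hΩ hf hn hx i, Finset.mul_sum]
    _ = -∑ i, pd i (pd i f) x :=
        struct_sum_left hψ (fun i j => pd i (pd j f) x) (fun i j => pd_comm hΩ hf hn hx i j)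
    _ = -lap f x := rfl

/-- `f ψ∂ψ∂ = -Δf` pointwise on an open set. -/
lemma DR_DR {n : WithTop ℕ∞} (hψ : StructuralSet ψ) (hΩ : IsOpen Ω)
    (hf : ContDiffOn ℝ n f Ω) (hn : 2 ≤ n) (hx : x ∈ Ω) :
    DR ψ (DR ψ f) x = -lap f x :=
  calc DR ψ (DR ψ f) x = ∑ i, pd i (DR ψ f) x * ι3 (ψ i) := rfl
    _ = ∑ i, ∑ j, pd i (pd j f) x * ι3 (ψ j) * ι3 (ψ i) :=
        Finset.sum_congr rfl fun i _ => by rw [pd_DR hΩ hf hn hx i, Finset.sum_mul]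
    _ = -∑ i, pd i (pd i f) x :=
        struct_sum_right hψ (fun i j => pd i (pd j f) x) (fun i j => pd_comm hΩ hf hn hx i j)
    _ = -lap f x := rfl

end Ops
section Final

variable {φ ψ : Fin 3 → V3} {f g : V3 → Cl3} {Ω : Set V3} {x : V3}

lemma DL_congr (hΩ : IsOpen Ω) (h : Set.EqOn f g Ω) (hx : x ∈ Ω) :
    DL φ f x = DL φ g x :=
  Finset.sum_congr rfl fun i _ => by rw [pd_congr hΩ h hx i]

lemma DL_zero_of (hΩ : IsOpen Ω) (h : ∀ y ∈ Ω, f y = 0) (hx : x ∈ Ω) :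
    DL φ f x = 0 := by
  rw [DL_congr (g := fun _ => (0:Cl3)) hΩ h hx]
  simp [DL, pd_const]

lemma DR_zero_of (hΩ : IsOpen Ω) (h : ∀ y ∈ Ω, f y = 0) (hx : x ∈ Ω) :
    DR ψ f x = 0 := by
  have : DR ψ f x = DR ψ (fun _ => (0:Cl3)) x :=
    Finset.sum_congr rfl fun i _ => by rw [pd_congr hΩ h hx i]
  rw [this]
  simp [DR, pd_const]

lemma DL_sub_smul (hf : DifferentiableAt ℝ f x) (hg : DifferentiableAt ℝ g x) (c : ℝ) :
    DL ψ (fun y => f y - c • g y) x = DL ψ f x - c • DL ψ g x := by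
  unfold DL
  rw [Finset.smul_sum, ← Finset.sum_sub_distrib]
  refine Finset.sum_congr rfl fun i _ => ?_
  rw [pd_sub (g := fun y => c • g y) hf (hg.const_smul c) i, pd_smul c hg i, mul_sub, mul_smul_comm]

lemma DR_sub_smul (hf : DifferentiableAt ℝ f x) (hg : DifferentiableAt ℝ g x) (c : ℝ) :
    DR ψ (fun y => f y - c • g y) x = DR ψ f x - c • DR ψ g x := by
  unfold DR
  rw [Finset.smul_sum, ← Finset.sum_sub_distrib]
  refine Finset.sum_congr rfl fun i _ => ?_
  rw [pd_sub (g := fun y => c • g y) hf (hg.const_smul c) i, pd_smul c hg i, sub_mul, smul_mul_assoc]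

lemma DL_add_smul (hf : DifferentiableAt ℝ f x) (hg : DifferentiableAt ℝ g x) (a b : ℝ) :
    DL ψ (fun y => a • f y + b • g y) x = a • DL ψ f x + b • DL ψ g x := by
  unfold DL
  rw [Finset.smul_sum, Finset.smul_sum, ← Finset.sum_add_distrib]
  refine Finset.sum_congr rfl fun i _ => ?_
  rw [pd_add (f := fun y => a • f y) (g := fun y => b • g y) (hf.const_smul a) (hg.const_smul b) i, pd_smul a hf i, pd_smul b hg i,
    mul_add, mul_smul_comm, mul_smul_comm]

lemma DL_smul (hf : DifferentiableAt ℝ f x) (c : ℝ) :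
    DL ψ (fun y => c • f y) x = c • DL ψ f x := by
  unfold DL
  rw [Finset.smul_sum]
  refine Finset.sum_congr rfl fun i _ => ?_
  rw [pd_smul c hf i, mul_smul_comm]

end Final

/-- if `u` is `(φ,ψ)`-harmonic or `(ψ,ψ)`-inframonogenic, then
`w̃ = uψ∂ - (α/β)ψ∂u` solves `α(φ∂ w̃ ψ∂) + β(φ∂ψ∂ w̃) = 0`. -/
theorem stmt17 (φ ψ : Fin 3 → V3) (hφ : StructuralSet φ) (hψ : StructuralSet ψ)
    (α β : ℝ) (hβ : β ≠ 0) (hαβ : α ^ 2 ≠ β ^ 2)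
    (Ω : Set V3) (hΩ : IsOpen Ω) (u : V3 → Cl3) (hu : ContDiffOn ℝ 3 u Ω)
    (hcase : (∀ x ∈ Ω, DL φ (DL ψ u) x = 0) ∨ (∀ x ∈ Ω, DLR ψ ψ u x = 0))
    (w : V3 → Cl3) (hw : w = fun x => DR ψ u x - (α / β) • DL ψ u x) :
    ∀ x ∈ Ω, α • DLR φ ψ w x + β • DL φ (DL ψ w) x = 0 := by
  intro x hx
  have h23 : (2:WithTop ℕ∞) ≤ 3 := by norm_num
  have h213 : (2:WithTop ℕ∞) + 1 ≤ 3 := by norm_num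
  have h112 : (1:WithTop ℕ∞) + 1 ≤ 2 := by norm_num
  have hDLu : ContDiffOn ℝ 2 (DL ψ u) Ω := contDiffOn_DL hΩ hu h213
  have hDRu : ContDiffOn ℝ 2 (DR ψ u) Ω := contDiffOn_DR hΩ hu h213
  have hw2 : ContDiffOn ℝ 2 w Ω := by
    rw [hw]; exact hDRu.sub (hDLu.const_smul _)
  set m : V3 → Cl3 := DL ψ (DR ψ u) with hm_def
  have hm : ContDiffOn ℝ 1 m Ω := contDiffOn_DL hΩ hDRu h112
  set c : ℝ := (β ^ 2 - α ^ 2) / β with hc_def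
  set g : V3 → Cl3 := fun y => α • DR ψ w y + β • DL ψ w y with hg_def
  -- g agrees with c • m on Ω
  have hgm : Set.EqOn g (fun y => c • m y) Ω := by
    intro y hy
    have hdr : DifferentiableAt ℝ (DR ψ u) y := diffAt hΩ hDRu (by norm_num) hy
    have hdl : DifferentiableAt ℝ (DL ψ u) y := diffAt hΩ hDLu (by norm_num) hy
    have e1 : DR ψ w y = -lap u y - (α/β) • m y := by
      rw [hw, DR_sub_smul hdr hdl (α/β), DR_DR hψ hΩ hu h23 hy,
        (DR_DL (φ := ψ) hΩ hu h23 hy).trans (DL_DR (φ := ψ) hΩ hu h23 hy).symm, hm_def]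
    have e2 : DL ψ w y = m y - (α/β) • (-lap u y) := by
      rw [hw, DL_sub_smul hdr hdl (α/β), DL_DL hψ hΩ hu h23 hy, hm_def]
    show α • DR ψ w y + β • DL ψ w y = c • m y
    rw [e1, e2, hc_def]
    match_scalars <;> field_simp <;> ring
  -- the LHS equals DL φ g x
  have hDRw : DifferentiableAt ℝ (DR ψ w) x :=
    diffAt hΩ (contDiffOn_DR (m := 1) hΩ hw2 h112) le_rfl hx
  have hDLw : DifferentiableAt ℝ (DL ψ w) x :=
    diffAt hΩ (contDiffOn_DL (m := 1) hΩ hw2 h112) le_rfl hx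
  have hsplit : DL φ g x = α • DL φ (DR ψ w) x + β • DL φ (DL ψ w) x := by
    rw [hg_def]; exact DL_add_smul hDRw hDLw α β
  have hmain : α • DLR φ ψ w x + β • DL φ (DL ψ w) x = DL φ g x := by
    rw [hsplit, ← DL_DR hΩ hw2 le_rfl hx]
  rw [hmain]
  -- DL φ g x = c • DL φ m x
  have hdm : DifferentiableAt ℝ m x := diffAt hΩ hm le_rfl hx
  have hDLg : DL φ g x = c • DL φ m x := by
    rw [DL_congr hΩ hgm hx]; exact DL_smul hdm c
  rw [hDLg]
  -- DL φ m x = 0 in both cases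
  have hzero : DL φ m x = 0 := by
    rcases hcase with hharm | hinfra
    · have hmDR : Set.EqOn m (DR ψ (DL ψ u)) Ω := fun y hy =>
        (DL_DR (φ := ψ) hΩ hu h23 hy).trans (DR_DL (φ := ψ) hΩ hu h23 hy).symm
      rw [DL_congr hΩ hmDR hx]
      rw [(DL_DR hΩ hDLu le_rfl hx).trans (DR_DL hΩ hDLu le_rfl hx).symm]
      exact DR_zero_of hΩ hharm hx
    · have hm0 : ∀ y ∈ Ω, m y = 0 := fun y hy =>
        (DL_DR (φ := ψ) hΩ hu h23 hy).trans (hinfra y hy)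
      exact DL_zero_of hΩ hm0 hx
  rw [hzero, smul_zero]
end FinDim2
end
end
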